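/- Let $d\ge 1$ and $\lambda>0$. There exist constants $c>0$ and $C>0$ such that for all integers $n\ge 2$, all $t>0$ and all $x\in Q$: $\int_Q |(G_d)^n(t,x,y)|\, dy \le C\,\bigl(1+t^{-\lambda}\bigr)\, e^{-ct}$. -/

import Mathlib

open MeasureTheory

/-- `φ_j(ξ) = √2 sin(jπξ)`. -/
noncomputable def phiF (j : ℕ) (ξ : ℝ) : ℝ := Real.sqrt 2 * Real.sin ((j : ℝ) * Real.pi * ξ)

/-- Green function of the heat operator on `[0,1]` with homogeneous
Dirichlet boundary conditions: `G(t,x,y) = ∑_{j≥1} e^{-j²π²t} φ_j(x) φ_j(y)`. -/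
noncomputable def G (t x y : ℝ) : ℝ :=
  ∑' j : ℕ, Real.exp (-((j : ℝ) + 1) ^ 2 * Real.pi ^ 2 * t) * phiF (j + 1) x * phiF (j + 1) y

/-- The cube `Q = [0,1]^d`. -/
def Q (d : ℕ) : Set (EuclideanSpace ℝ (Fin d)) := {x | ∀ i, x i ∈ Set.Icc (0 : ℝ) 1}

/-- `G_d(t,x,y) = ∏_i G(t,x_i,y_i)` on `Q = [0,1]^d`. -/
noncomputable def Gd (d : ℕ) (t : ℝ) (x y : EuclideanSpace ℝ (Fin d)) : ℝ :=
  ∏ i, G t (x i) (y i)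

/-- `‖φ‖_{(α)}² = ∫_Q ∫_Q |φ(y)| |y-z|^{-α} |φ(z)| dy dz`. -/
noncomputable def normAlphaSq (d : ℕ) (α : ℝ) (f : EuclideanSpace ℝ (Fin d) → ℝ) : ℝ :=
  ∫ y in Q d, ∫ z in Q d, |f y| * ‖y - z‖ ^ (-α) * |f z|

/-- `κ_n(y) = ⌊ny⌋/n`. -/
noncomputable def kappa (n : ℕ) (y : ℝ) : ℝ := (⌊(n : ℝ) * y⌋ : ℝ) / n

/-- `λ_j^n = -4n² sin²(jπ/(2n))`. -/
noncomputable def lamn (n j : ℕ) : ℝ :=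
  -4 * (n : ℝ) ^ 2 * Real.sin ((j : ℝ) * Real.pi / (2 * n)) ^ 2

/-- Piecewise-linear interpolation of `φ_j` on the grid `{i/n : 0 ≤ i ≤ n}`. -/
noncomputable def phiLin (n j : ℕ) (x : ℝ) : ℝ :=
  phiF j ((⌊(n : ℝ) * x⌋ : ℝ) / n) +
    ((n : ℝ) * x - (⌊(n : ℝ) * x⌋ : ℝ)) *
      (phiF j (((⌊(n : ℝ) * x⌋ : ℝ) + 1) / n) - phiF j ((⌊(n : ℝ) * x⌋ : ℝ) / n))

/-- Space-discretized Green function on `[0,1]`: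
`G^n(t,x,y) = ∑_{j=1}^{n-1} e^{λ_j^n t} φ_j^n(x) φ_j(κ_n(y))`. -/
noncomputable def Gn (n : ℕ) (t x y : ℝ) : ℝ :=
  ∑ j ∈ Finset.Icc 1 (n - 1), Real.exp (lamn n j * t) * phiLin n j x * phiF j (kappa n y)

/-- `(G_d)^n(t,x,y) = ∏_i G^n(t,x_i,y_i)`. -/
noncomputable def Gdn (d n : ℕ) (t : ℝ) (x y : EuclideanSpace ℝ (Fin d)) : ℝ :=
  ∏ i, Gn n t (x i) (y i)


namespace Stmt8Aux

open Finset

/-! ### The double exponential series and the discrete periodic heat kernel `q` -/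

noncomputable def w (z : ℝ) (p : ℕ × ℕ) : ℝ :=
  z ^ p.1 / p.1.factorial * (z ^ p.2 / p.2.factorial)

lemma tsum_exp_ser (z : ℝ) : ∑' a : ℕ, z ^ a / (a.factorial : ℝ) = Real.exp z := by
  rw [Real.exp_eq_exp_ℝ, NormedSpace.exp_eq_tsum_div]

lemma w_nonneg {z : ℝ} (hz : 0 ≤ z) (p : ℕ × ℕ) : 0 ≤ w z p :=
  mul_nonneg (div_nonneg (pow_nonneg hz _) (by positivity))
    (div_nonneg (pow_nonneg hz _) (by positivity))

lemma summable_w {z : ℝ} (hz : 0 ≤ z) : Summable (w z) :=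
  (Real.summable_pow_div_factorial z).mul_of_nonneg (Real.summable_pow_div_factorial z)
    (fun a => div_nonneg (pow_nonneg hz _) (by positivity))
    (fun a => div_nonneg (pow_nonneg hz _) (by positivity))

lemma summable_norm_exp_ser {z : ℝ} (hz : 0 ≤ z) :
    Summable fun a : ℕ => ‖z ^ a / (a.factorial : ℝ)‖ :=
  (Real.summable_pow_div_factorial z).congr fun a =>
    (Real.norm_of_nonneg (div_nonneg (pow_nonneg hz _) (by positivity))).symm

lemma tsum_w {z : ℝ} (hz : 0 ≤ z) : ∑' p : ℕ × ℕ, w z p = Real.exp z * Real.exp z := by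
  rw [← tsum_exp_ser z]
  exact (tsum_mul_tsum_of_summable_norm (summable_norm_exp_ser hz)
    (summable_norm_exp_ser hz)).symm

noncomputable def q (N : ℕ) (z : ℝ) (m : ℤ) : ℝ :=
  ∑' p : ℕ × ℕ, if (N : ℤ) ∣ ((p.1 : ℤ) - (p.2 : ℤ) - m) then w z p else 0

lemma summable_q {z : ℝ} (hz : 0 ≤ z) (N : ℕ) (m : ℤ) :
    Summable (fun p : ℕ × ℕ => if (N : ℤ) ∣ ((p.1 : ℤ) - (p.2 : ℤ) - m) then w z p else 0) := by
  refine Summable.of_nonneg_of_le (fun p => ?_) (fun p => ?_) (summable_w hz)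
  · split <;> simp [w_nonneg hz]
  · split
    · exact le_rfl
    · exact w_nonneg hz p

lemma q_nonneg {z : ℝ} (hz : 0 ≤ z) (N : ℕ) (m : ℤ) : 0 ≤ q N z m :=
  tsum_nonneg fun p => by split <;> simp [w_nonneg hz]

lemma sum_q_le {N : ℕ} {z : ℝ} (hz : 0 ≤ z) {ι : Type*} [DecidableEq ι] (S : Finset ι)
    (g : ι → ℤ) (hg : ∀ a ∈ S, ∀ b ∈ S, (N : ℤ) ∣ (g a - g b) → a = b) :
    ∑ a ∈ S, q N z (g a) ≤ Real.exp z * Real.exp z := by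
  classical
  rw [← tsum_w hz]
  unfold q
  rw [← Summable.tsum_finsetSum (fun a _ => summable_q hz N (g a))]
  refine Summable.tsum_le_tsum (fun p => ?_) (summable_sum (fun a _ => summable_q hz N (g a)))
    (summable_w hz)
  rw [Finset.sum_ite, Finset.sum_const_zero, add_zero, Finset.sum_const]
  have hcard : (S.filter fun a => (N : ℤ) ∣ ((p.1 : ℤ) - (p.2 : ℤ) - g a)).card ≤ 1 := by
    rw [Finset.card_le_one]
    intro a ha b hb
    simp only [Finset.mem_filter] at ha hb
    refine hg a ha.1 b hb.1 ?_
    have h := dvd_sub hb.2 ha.2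
    have he : ((p.1 : ℤ) - (p.2 : ℤ) - g b - ((p.1 : ℤ) - (p.2 : ℤ) - g a)) = g a - g b := by ring
    rwa [he] at h
  calc (S.filter fun a => (N : ℤ) ∣ ((p.1 : ℤ) - (p.2 : ℤ) - g a)).card • w z p
      ≤ 1 • w z p := by
        exact smul_le_smul_of_nonneg_right (by exact_mod_cast hcard) (w_nonneg hz p)
    _ = w z p := one_smul _ _


/-! ### Complex series lemmas -/

lemma exp_tsum_c (v : ℂ) : Complex.exp v = ∑' a : ℕ, v ^ a / (a.factorial : ℂ) := by
  rw [Complex.exp_eq_exp_ℂ, NormedSpace.exp_eq_tsum_div]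

lemma summable_norm_c {z : ℝ} (hz : 0 ≤ z) {u : ℂ} (hu : ‖u‖ = 1) :
    Summable fun a : ℕ => ‖(↑z * u) ^ a / (a.factorial : ℂ)‖ := by
  refine (Real.summable_pow_div_factorial z).congr fun a => ?_
  rw [norm_div, norm_pow, norm_mul, Complex.norm_real, Real.norm_of_nonneg hz, hu, mul_one,
    Complex.norm_natCast]

/-- per-`j` expansion of `e^{2z cos(jπ/n)} e^{-i j m π/n}` as a double series. -/
lemma term_eq (n : ℕ) {z : ℝ} (hz : 0 ≤ z) (m : ℤ) (j : ℕ) :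
    (Real.exp (2 * z * Real.cos ((j : ℝ) * (Real.pi / n))) : ℂ)
        * Complex.exp (↑(-((j : ℝ) * (Real.pi / n) * (m : ℝ))) * Complex.I)
      = ∑' p : ℕ × ℕ,
          (w z p : ℂ) *
            Complex.exp (↑((((p.1 : ℤ) - (p.2 : ℤ) - m : ℤ) : ℝ) * (Real.pi / n)) * Complex.I)
              ^ j := by
  set θ : ℝ := Real.pi / n with hθ
  set u : ℂ := Complex.exp (↑((j : ℝ) * θ) * Complex.I) with hu
  have hu0 : u ≠ 0 := Complex.exp_ne_zero _
  have hunorm : ‖u‖ = 1 := Complex.norm_exp_ofReal_mul_I _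
  have huinv : u⁻¹ = Complex.exp (-(↑((j : ℝ) * θ) * Complex.I)) := by
    rw [hu, ← Complex.exp_neg]
  have huinvnorm : ‖u⁻¹‖ = 1 := by rw [norm_inv, hunorm]; norm_num
  -- exp as power: u ^ (r : ℤ) = (exp(rθ i))^j
  have hzpow : ∀ r : ℤ, u ^ r = Complex.exp (↑((r : ℝ) * θ) * Complex.I) ^ j := by
    intro r
    rw [hu, ← Complex.exp_int_mul, ← Complex.exp_nat_mul]
    congr 1
    push_cast
    ring
  -- the real exponential as product of two complex exponentials
  have h2 : u + u⁻¹ = 2 * Complex.cos (↑((j : ℝ) * θ)) := by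
    rw [hu, huinv, ← neg_mul, Complex.exp_mul_I, Complex.exp_mul_I, Complex.cos_neg,
      Complex.sin_neg]
    ring
  have hcos : ((2 * z * Real.cos ((j : ℝ) * θ) : ℝ) : ℂ) = ↑z * u + ↑z * u⁻¹ := by
    rw [← mul_add, h2, ← Complex.ofReal_cos]
    push_cast
    ring
  have hexp : (Real.exp (2 * z * Real.cos ((j : ℝ) * θ)) : ℂ)
      = Complex.exp (↑z * u) * Complex.exp (↑z * u⁻¹) := by
    rw [← Complex.exp_add, ← hcos, Complex.ofReal_exp]
  have hprod : Complex.exp (↑z * u) * Complex.exp (↑z * u⁻¹)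
      = ∑' p : ℕ × ℕ,
          ((↑z * u) ^ p.1 / (p.1.factorial : ℂ)) * ((↑z * u⁻¹) ^ p.2 / (p.2.factorial : ℂ)) := by
    rw [exp_tsum_c, exp_tsum_c]
    exact tsum_mul_tsum_of_summable_norm (summable_norm_c hz hunorm)
      (summable_norm_c hz huinvnorm)
  have hv : Complex.exp (↑(-((j : ℝ) * θ * (m : ℝ))) * Complex.I) = u ^ (-m) := by
    rw [hu, ← Complex.exp_int_mul]
    congr 1
    push_cast
    ring
  rw [hexp, hv, hprod, ← tsum_mul_right]
  refine tsum_congr fun p => ?_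
  rw [← hzpow (((p.1 : ℤ) - (p.2 : ℤ) - m : ℤ))]
  rw [mul_pow, mul_pow]
  have e1 : u ^ p.1 = u ^ (p.1 : ℤ) := (zpow_natCast u p.1).symm
  have e2 : u⁻¹ ^ p.2 = u ^ (-(p.2 : ℤ)) := by rw [inv_pow, ← zpow_natCast u p.2, ← zpow_neg]
  have e3 : u ^ (p.1 : ℤ) * u ^ (-(p.2 : ℤ)) * u ^ (-m)
      = u ^ ((p.1 : ℤ) - (p.2 : ℤ) - m) := by
    rw [← zpow_add₀ hu0, ← zpow_add₀ hu0]
    congr 1 <;> ring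
  have hw : (w z p : ℂ) = (↑z) ^ p.1 / (p.1.factorial : ℂ) * ((↑z) ^ p.2 / (p.2.factorial : ℂ)) := by
    unfold w
    push_cast
    ring
  rw [hw, ← e3, ← e1, ← e2]
  ring

/-- geometric sum of `2n`-th roots of unity. -/
lemma geom_aux (n : ℕ) (hn : 0 < n) (r : ℤ) :
    ∑ j ∈ range (2 * n), Complex.exp (↑((r : ℝ) * (Real.pi / n)) * Complex.I) ^ j
      = if ((2 * n : ℕ) : ℤ) ∣ r then ((2 * n : ℕ) : ℂ) else 0 := by
  have hn0 : (n : ℝ) ≠ 0 := by positivity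
  set x : ℂ := Complex.exp (↑((r : ℝ) * (Real.pi / n)) * Complex.I) with hx
  have hx2n : x ^ (2 * n) = 1 := by
    rw [hx, ← Complex.exp_nat_mul]
    have hnc : (n : ℂ) ≠ 0 := Nat.cast_ne_zero.mpr (by omega)
    have harg : ((2 * n : ℕ) : ℂ) * (↑((r : ℝ) * (Real.pi / n)) * Complex.I)
        = (r : ℂ) * (2 * ↑Real.pi * Complex.I) := by
      push_cast
      field_simp
    rw [harg, Complex.exp_int_mul_two_pi_mul_I]
  by_cases hdvd : ((2 * n : ℕ) : ℤ) ∣ r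
  · have hx1 : x = 1 := by
      obtain ⟨c, hc⟩ := hdvd
      rw [hx]
      have hnc : (n : ℂ) ≠ 0 := Nat.cast_ne_zero.mpr (by omega)
      have harg : (↑((r : ℝ) * (Real.pi / n)) * Complex.I) = (c : ℤ) * (2 * ↑Real.pi * Complex.I) := by
        rw [hc]
        push_cast
        field_simp
      rw [harg, Complex.exp_int_mul_two_pi_mul_I]
    rw [if_pos hdvd]
    simp [hx1]
  · have hx1 : x ≠ 1 := by
      intro h
      rw [hx, Complex.exp_eq_one_iff] at h
      obtain ⟨k, hk⟩ := h
      have hk' : (↑((r : ℝ) * (Real.pi / n)) : ℂ) * Complex.I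
          = (↑((k : ℝ) * (2 * Real.pi)) : ℂ) * Complex.I := by
        rw [hk]; push_cast; ring
      have hre : (r : ℝ) * (Real.pi / n) = (k : ℝ) * (2 * Real.pi) := by
        have := mul_right_cancel₀ Complex.I_ne_zero hk'
        exact_mod_cast this
      apply hdvd
      have hpi : Real.pi ≠ 0 := Real.pi_ne_zero
      have h0 : ((r : ℝ) - 2 * n * k) * Real.pi = 0 := by
        have hn0' : (n : ℝ) ≠ 0 := hn0
        field_simp at hre
        linear_combination Real.pi * hre
      have h1 : (r : ℝ) = ((2 * n : ℕ) : ℝ) * (k : ℝ) := by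
        rcases mul_eq_zero.mp h0 with h | h
        · push_cast
          linarith
        · exact absurd h hpi
      exact ⟨k, by exact_mod_cast h1⟩
    rw [if_neg hdvd, geom_sum_eq hx1, hx2n]
    simp

/-- The full Fourier identity, complex form. -/
lemma hsumC (n : ℕ) (hn : 0 < n) {z : ℝ} (hz : 0 ≤ z) (m : ℤ) :
    ∑ j ∈ range (2 * n), (Real.exp (2 * z * Real.cos ((j : ℝ) * (Real.pi / n))) : ℂ)
        * Complex.exp (↑(-((j : ℝ) * (Real.pi / n) * (m : ℝ))) * Complex.I)
      = ((2 * n * q (2 * n) z m : ℝ) : ℂ) := by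
  have hsumm : ∀ j : ℕ, Summable (fun p : ℕ × ℕ =>
      (w z p : ℂ) *
        Complex.exp (↑((((p.1 : ℤ) - (p.2 : ℤ) - m : ℤ) : ℝ) * (Real.pi / n)) * Complex.I) ^ j) := by
    intro j
    apply Summable.of_norm
    refine (summable_w hz).congr fun p => ?_
    have h1 : ‖Complex.exp (↑((((p.1 : ℤ) - (p.2 : ℤ) - m : ℤ) : ℝ) * (Real.pi / n)) * Complex.I)‖ = 1 := by
      rw [Complex.norm_exp_ofReal_mul_I]
    rw [norm_mul, norm_pow, h1, one_pow, mul_one, Complex.norm_real,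
      Real.norm_of_nonneg (w_nonneg hz p)]
  calc ∑ j ∈ range (2 * n), (Real.exp (2 * z * Real.cos ((j : ℝ) * (Real.pi / n))) : ℂ)
        * Complex.exp (↑(-((j : ℝ) * (Real.pi / n) * (m : ℝ))) * Complex.I)
      = ∑ j ∈ range (2 * n), ∑' p : ℕ × ℕ,
          (w z p : ℂ) *
            Complex.exp (↑((((p.1 : ℤ) - (p.2 : ℤ) - m : ℤ) : ℝ) * (Real.pi / n)) * Complex.I)
              ^ j := Finset.sum_congr rfl fun j _ => term_eq n hz m j
    _ = ∑' p : ℕ × ℕ, ∑ j ∈ range (2 * n),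
          (w z p : ℂ) *
            Complex.exp (↑((((p.1 : ℤ) - (p.2 : ℤ) - m : ℤ) : ℝ) * (Real.pi / n)) * Complex.I)
              ^ j := (Summable.tsum_finsetSum (fun j _ => hsumm j)).symm
    _ = ∑' p : ℕ × ℕ, ((if ((2 * n : ℕ) : ℤ) ∣ ((p.1 : ℤ) - (p.2 : ℤ) - m)
          then (2 * n : ℕ) * w z p else 0 : ℝ) : ℂ) := by
        refine tsum_congr fun p => ?_
        rw [← Finset.mul_sum, geom_aux n hn (((p.1 : ℤ) - (p.2 : ℤ) - m))]
        split
        · push_cast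
          ring
        · push_cast
          ring
    _ = ((2 * n * q (2 * n) z m : ℝ) : ℂ) := by
        rw [← Complex.ofReal_tsum, Complex.ofReal_inj]
        unfold q
        rw [← tsum_mul_left]
        refine tsum_congr fun p => ?_
        rw [mul_ite, mul_zero]
        split <;> push_cast <;> ring

/-- The full Fourier identity, real form. -/
lemma hsumR (n : ℕ) (hn : 0 < n) {z : ℝ} (hz : 0 ≤ z) (m : ℤ) :
    ∑ j ∈ range (2 * n), Real.exp (2 * z * Real.cos ((j : ℝ) * (Real.pi / n)))
        * Real.cos ((j : ℝ) * (Real.pi / n) * (m : ℝ))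
      = 2 * n * q (2 * n) z m := by
  have h := congrArg Complex.re (hsumC n hn hz m)
  rw [Complex.ofReal_re, Complex.re_sum] at h
  rw [← h]
  refine Finset.sum_congr rfl fun j _ => ?_
  rw [Complex.re_ofReal_mul, Complex.exp_ofReal_mul_I_re, Real.cos_neg]

/-! ### Folding the Fourier sum to `j ∈ [1, n-1]` -/

lemma T_eq (n : ℕ) (hn : 2 ≤ n) {z : ℝ} (hz : 0 ≤ z) (m : ℤ) :
    2 * ∑ j ∈ Finset.Icc 1 (n - 1),
        Real.exp (2 * z * Real.cos ((j : ℝ) * (Real.pi / n)))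
          * Real.cos ((j : ℝ) * (Real.pi / n) * (m : ℝ))
      = 2 * n * q (2 * n) z m - Real.exp (2 * z)
          - Real.exp (-(2 * z)) * Real.cos (Real.pi * (m : ℝ)) := by
  have hn0 : (n : ℝ) ≠ 0 := Nat.cast_ne_zero.mpr (by omega)
  set f : ℕ → ℝ := fun j => Real.exp (2 * z * Real.cos ((j : ℝ) * (Real.pi / n)))
    * Real.cos ((j : ℝ) * (Real.pi / n) * (m : ℝ)) with hf
  have key := hsumR n (by omega) hz m
  -- decompose the range
  have e0 : range (2 * n) = Finset.Ico 0 (2 * n) := by rw [Finset.range_eq_Ico]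
  have h01 : (0 : ℕ) ≤ 1 := by omega
  have h1n : (1 : ℕ) ≤ n := by omega
  have hnn1 : n ≤ n + 1 := by omega
  have hn12n : n + 1 ≤ 2 * n := by omega
  have hsplit : ∑ j ∈ range (2 * n), f j
      = f 0 + (∑ j ∈ Finset.Ico 1 n, f j) + f n + ∑ j ∈ Finset.Ico (n + 1) (2 * n), f j := by
    rw [e0]
    rw [← Finset.sum_Ico_consecutive f h01 (by omega : 1 ≤ 2 * n)]
    rw [← Finset.sum_Ico_consecutive f h1n (by omega : n ≤ 2 * n)]
    rw [← Finset.sum_Ico_consecutive f hnn1 hn12n]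
    have : ∑ j ∈ Finset.Ico 0 1, f j = f 0 := by simp
    have h2 : ∑ j ∈ Finset.Ico n (n + 1), f j = f n := by simp
    rw [this, h2]
    ring
  -- reflection
  have hrefl : ∑ j ∈ Finset.Ico (n + 1) (2 * n), f j = ∑ j ∈ Finset.Ico 1 n, f j := by
    refine Finset.sum_nbij' (fun j => 2 * n - j) (fun j => 2 * n - j) ?_ ?_ ?_ ?_ ?_
    · intro a ha
      simp only [Finset.mem_Ico] at ha ⊢
      omega
    · intro a ha
      simp only [Finset.mem_Ico] at ha ⊢
      omega
    · intro a ha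
      simp only [Finset.mem_Ico] at ha
      show 2 * n - (2 * n - a) = a
      omega
    · intro a ha
      simp only [Finset.mem_Ico] at ha
      show 2 * n - (2 * n - a) = a
      omega
    · intro a ha
      simp only [Finset.mem_Ico] at ha
      show f a = f (2 * n - a)
      have hcast : ((2 * n - a : ℕ) : ℝ) = 2 * (n : ℝ) - (a : ℝ) := by
        push_cast [Nat.cast_sub (by omega : a ≤ 2 * n)]
        ring
      rw [hf]
      simp only [hcast]
      have harg1 : (2 * (n : ℝ) - (a : ℝ)) * (Real.pi / n) = 2 * Real.pi - (a : ℝ) * (Real.pi / n) := by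
        field_simp
      have harg2 : (2 * (n : ℝ) - (a : ℝ)) * (Real.pi / n) * (m : ℝ)
          = (m : ℤ) * (2 * Real.pi) - (a : ℝ) * (Real.pi / n) * (m : ℝ) := by
        field_simp
      rw [harg2, harg1, Real.cos_two_pi_sub, Real.cos_int_mul_two_pi_sub]
  have hf0 : f 0 = Real.exp (2 * z) := by simp [hf]
  have hfn : f n = Real.exp (-(2 * z)) * Real.cos (Real.pi * (m : ℝ)) := by
    have h1 : (n : ℝ) * (Real.pi / n) = Real.pi := by field_simp
    have h2 : (n : ℝ) * (Real.pi / n) * (m : ℝ) = Real.pi * (m : ℝ) := by rw [h1]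
    simp only [hf, h1, h2, Real.cos_pi]
    ring_nf
  have hIcc : Finset.Ico 1 n = Finset.Icc 1 (n - 1) := by
    rw [← Finset.Ico_add_one_right_eq_Icc]
    congr 1
    omega
  rw [hsplit, hrefl, hf0, hfn, hIcc] at key
  linarith [key]

/-! ### The discrete kernel row `Rk` and its mass bound -/

noncomputable def Rk (n : ℕ) (t : ℝ) (i k : ℤ) : ℝ :=
  ∑ j ∈ Finset.Icc 1 (n - 1), Real.exp (lamn n j * t) * (phiF j ((i : ℝ) / n) * phiF j ((k : ℝ) / n))

lemma lamn_t (n : ℕ) (hn : 2 ≤ n) (j : ℕ) (t : ℝ) :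
    lamn n j * t = 2 * ((n : ℝ) ^ 2 * t) * Real.cos ((j : ℝ) * (Real.pi / n))
      - 2 * ((n : ℝ) ^ 2 * t) := by
  have hn0 : (n : ℝ) ≠ 0 := Nat.cast_ne_zero.mpr (by omega)
  unfold lamn
  have harg : (j : ℝ) * (Real.pi / n) = 2 * ((j : ℝ) * Real.pi / (2 * n)) := by
    field_simp
  have hcos : Real.cos ((j : ℝ) * (Real.pi / n))
      = 1 - 2 * Real.sin ((j : ℝ) * Real.pi / (2 * n)) ^ 2 := by
    rw [harg, Real.cos_two_mul]
    have := Real.sin_sq_add_cos_sq ((j : ℝ) * Real.pi / (2 * n))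
    nlinarith [this]
  rw [hcos]
  ring

lemma phiF_prod (n : ℕ) (hn : 2 ≤ n) (j : ℕ) (i k : ℤ) :
    phiF j ((i : ℝ) / n) * phiF j ((k : ℝ) / n)
      = Real.cos ((j : ℝ) * (Real.pi / n) * (((i - k : ℤ) : ℤ) : ℝ))
        - Real.cos ((j : ℝ) * (Real.pi / n) * (((i + k : ℤ) : ℤ) : ℝ)) := by
  have hn0 : (n : ℝ) ≠ 0 := Nat.cast_ne_zero.mpr (by omega)
  unfold phiF
  rw [Real.cos_sub_cos]
  push_cast
  have h1 : ((j : ℝ) * (Real.pi / n) * ((i : ℝ) - (k : ℝ))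
        + (j : ℝ) * (Real.pi / n) * ((i : ℝ) + (k : ℝ))) / 2
      = (j : ℝ) * Real.pi * ((i : ℝ) / n) := by
    field_simp
    ring
  have h2 : ((j : ℝ) * (Real.pi / n) * ((i : ℝ) - (k : ℝ))
        - (j : ℝ) * (Real.pi / n) * ((i : ℝ) + (k : ℝ))) / 2
      = -((j : ℝ) * Real.pi * ((k : ℝ) / n)) := by
    field_simp
    ring
  rw [h1, h2, Real.sin_neg]
  have hs : Real.sqrt 2 * Real.sqrt 2 = 2 := Real.mul_self_sqrt (by norm_num)
  linear_combination Real.sin ((j:ℝ) * Real.pi * ((i:ℝ) / n))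
    * Real.sin ((j:ℝ) * Real.pi * ((k:ℝ) / n)) * hs

lemma Rk_eq (n : ℕ) (hn : 2 ≤ n) {t : ℝ} (ht : 0 ≤ t) (i k : ℤ) :
    Rk n t i k = Real.exp (-(2 * ((n : ℝ) ^ 2 * t)))
      * ((n : ℝ) * (q (2 * n) ((n : ℝ) ^ 2 * t) (i - k) - q (2 * n) ((n : ℝ) ^ 2 * t) (i + k))) := by
  set z : ℝ := (n : ℝ) ^ 2 * t with hz'
  have hz : 0 ≤ z := by positivity
  have h1 : Rk n t i k = Real.exp (-(2 * z)) * ∑ j ∈ Finset.Icc 1 (n - 1),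
      (Real.exp (2 * z * Real.cos ((j : ℝ) * (Real.pi / n)))
        * Real.cos ((j : ℝ) * (Real.pi / n) * (((i - k : ℤ) : ℤ) : ℝ))
      - Real.exp (2 * z * Real.cos ((j : ℝ) * (Real.pi / n)))
        * Real.cos ((j : ℝ) * (Real.pi / n) * (((i + k : ℤ) : ℤ) : ℝ))) := by
    unfold Rk
    rw [Finset.mul_sum]
    refine Finset.sum_congr rfl fun j hj => ?_
    rw [lamn_t n hn j t, phiF_prod n hn j i k]
    rw [show 2 * z * Real.cos ((j : ℝ) * (Real.pi / n)) - 2 * z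
        = -(2 * z) + 2 * z * Real.cos ((j : ℝ) * (Real.pi / n)) by ring]
    rw [Real.exp_add]
    ring
  rw [h1, Finset.sum_sub_distrib]
  have hT1 := T_eq n hn hz (i - k)
  have hT2 := T_eq n hn hz (i + k)
  have hcos : Real.cos (Real.pi * (((i - k : ℤ) : ℤ) : ℝ))
      = Real.cos (Real.pi * (((i + k : ℤ) : ℤ) : ℝ)) := by
    have harg : Real.pi * (((i + k : ℤ) : ℤ) : ℝ)
        = Real.pi * (((i - k : ℤ) : ℤ) : ℝ) + (k : ℤ) * (2 * Real.pi) := by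
      push_cast
      ring
    rw [harg, Real.cos_add_int_mul_two_pi]
  have hgoal : (∑ j ∈ Finset.Icc 1 (n - 1),
        Real.exp (2 * z * Real.cos ((j : ℝ) * (Real.pi / n)))
          * Real.cos ((j : ℝ) * (Real.pi / n) * (((i - k : ℤ) : ℤ) : ℝ)))
      - (∑ j ∈ Finset.Icc 1 (n - 1),
        Real.exp (2 * z * Real.cos ((j : ℝ) * (Real.pi / n)))
          * Real.cos ((j : ℝ) * (Real.pi / n) * (((i + k : ℤ) : ℤ) : ℝ)))
      = (n : ℝ) * (q (2 * n) z (i - k) - q (2 * n) z (i + k)) := by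
    linear_combination (1/2 : ℝ) * hT1 - (1/2 : ℝ) * hT2 - (Real.exp (-(2*z)) / 2) * hcos
  rw [hgoal]

lemma mass (n : ℕ) (hn : 2 ≤ n) {t : ℝ} (ht : 0 ≤ t) (i : ℤ) :
    ∑ k ∈ Finset.range n, |Rk n t i (k : ℤ)| ≤ 2 * n := by
  classical
  set z : ℝ := (n : ℝ) ^ 2 * t with hz'
  have hz : 0 ≤ z := by positivity
  have hinj : ∀ (c : ℤ) (s : ℤ), s = 1 ∨ s = -1 → ∀ a ∈ Finset.range n, ∀ b ∈ Finset.range n,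
      ((2 * n : ℕ) : ℤ) ∣ ((c + s * a) - (c + s * b)) → a = b := by
    intro c s hs a ha b hb hdvd
    simp only [Finset.mem_range] at ha hb
    have h1 : ((c + s * a) - (c + s * b)) = s * ((a : ℤ) - b) := by ring
    rw [h1] at hdvd
    have h2 : ((2 * n : ℕ) : ℤ) ∣ ((a : ℤ) - b) := by
      rcases hs with h | h <;> rw [h] at hdvd
      · simpa using hdvd
      · have : ((2*n : ℕ) : ℤ) ∣ ((b : ℤ) - a) := by simpa using hdvd
        simpa using this.neg_right
    have h3 : (a : ℤ) - b = 0 := Int.eq_zero_of_abs_lt_dvd h2 (by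
      rw [abs_sub_lt_iff]
      constructor <;> push_cast <;> omega)
    omega
  have hq1 : ∑ k ∈ Finset.range n, q (2 * n) z (i - k) ≤ Real.exp z * Real.exp z := by
    refine sum_q_le hz (Finset.range n) (fun k => i - k) ?_
    intro a ha b hb hdvd
    refine hinj i (-1) (Or.inr rfl) a ha b hb ?_
    convert hdvd using 2 <;> ring
  have hq2 : ∑ k ∈ Finset.range n, q (2 * n) z (i + k) ≤ Real.exp z * Real.exp z := by
    refine sum_q_le hz (Finset.range n) (fun k => i + k) ?_
    intro a ha b hb hdvd
    refine hinj i 1 (Or.inl rfl) a ha b hb ?_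
    convert hdvd using 2 <;> ring
  have hbd : ∀ k ∈ Finset.range n, |Rk n t i (k : ℤ)|
      ≤ Real.exp (-(2 * z)) * (n : ℝ) * (q (2 * n) z (i - k) + q (2 * n) z (i + k)) := by
    intro k _
    have hq1' := q_nonneg hz (2 * n) (i - k)
    have hq2' := q_nonneg hz (2 * n) (i + k)
    calc |Rk n t i (k : ℤ)|
        = Real.exp (-(2 * z)) * ((n : ℝ)
            * |q (2 * n) z (i - k) - q (2 * n) z (i + k)|) := by
          rw [Rk_eq n hn ht i (k : ℤ), abs_mul, abs_mul, abs_of_nonneg (Real.exp_pos _).le,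
            abs_of_nonneg (by positivity : (0:ℝ) ≤ (n : ℝ))]
      _ ≤ Real.exp (-(2 * z)) * ((n : ℝ)
            * (q (2 * n) z (i - k) + q (2 * n) z (i + k))) := by
          gcongr
          rw [abs_sub_le_iff]
          constructor <;> linarith
      _ = Real.exp (-(2 * z)) * (n : ℝ) * (q (2 * n) z (i - k) + q (2 * n) z (i + k)) := by
          ring
  calc ∑ k ∈ Finset.range n, |Rk n t i (k : ℤ)|
      ≤ ∑ k ∈ Finset.range n,
          Real.exp (-(2 * z)) * (n : ℝ) * (q (2 * n) z (i - k) + q (2 * n) z (i + k)) :=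
        Finset.sum_le_sum hbd
    _ = Real.exp (-(2 * z)) * (n : ℝ)
          * ((∑ k ∈ Finset.range n, q (2 * n) z (i - k))
            + ∑ k ∈ Finset.range n, q (2 * n) z (i + k)) := by
        rw [← Finset.mul_sum, Finset.sum_add_distrib]
    _ ≤ Real.exp (-(2 * z)) * (n : ℝ) * (2 * (Real.exp z * Real.exp z)) := by
        refine mul_le_mul_of_nonneg_left ?_ (by positivity)
        linarith [hq1, hq2]
    _ = 2 * n := by
        have h0 : Real.exp (-(2 * z)) * (Real.exp z * Real.exp z) = 1 := by
          rw [← Real.exp_add, ← Real.exp_add, show -(2 * z) + (z + z) = 0 by ring, Real.exp_zero]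
        linear_combination (2 * (n : ℝ)) * h0

/-! ### Pointwise facts about `Gn` -/

lemma Gn_cell (n : ℕ) (t x y : ℝ) (k : ℤ) (hk : ⌊(n : ℝ) * y⌋ = k) :
    Gn n t x y = (1 - Int.fract ((n : ℝ) * x)) * Rk n t ⌊(n : ℝ) * x⌋ k
      + Int.fract ((n : ℝ) * x) * Rk n t (⌊(n : ℝ) * x⌋ + 1) k := by
  unfold Gn Rk phiLin kappa
  rw [hk]
  rw [Finset.mul_sum, Finset.mul_sum, ← Finset.sum_add_distrib]
  refine Finset.sum_congr rfl fun j hj => ?_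
  rw [Int.fract]
  push_cast
  ring

lemma phiF_abs_le (j : ℕ) (ξ : ℝ) : |phiF j ξ| ≤ Real.sqrt 2 := by
  unfold phiF
  rw [abs_mul, abs_of_nonneg (Real.sqrt_nonneg 2)]
  calc Real.sqrt 2 * |Real.sin ((j : ℝ) * Real.pi * ξ)| ≤ Real.sqrt 2 * 1 := by
        gcongr
        exact Real.abs_sin_le_one _
    _ = Real.sqrt 2 := mul_one _

lemma phiLin_abs_le (n j : ℕ) (x : ℝ) : |phiLin n j x| ≤ Real.sqrt 2 := by
  unfold phiLin
  set a := phiF j ((⌊(n : ℝ) * x⌋ : ℝ) / n)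
  set b := phiF j (((⌊(n : ℝ) * x⌋ : ℝ) + 1) / n)
  set θ := (n : ℝ) * x - (⌊(n : ℝ) * x⌋ : ℝ) with hθ
  have h0 : 0 ≤ θ := by
    rw [hθ]
    have := Int.floor_le ((n : ℝ) * x)
    linarith
  have h1 : θ ≤ 1 := by
    rw [hθ]
    have := Int.lt_floor_add_one ((n : ℝ) * x)
    linarith
  have ha : |a| ≤ Real.sqrt 2 := phiF_abs_le _ _
  have hb : |b| ≤ Real.sqrt 2 := phiF_abs_le _ _
  have : a + θ * (b - a) = (1 - θ) * a + θ * b := by ring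
  rw [this]
  calc |(1 - θ) * a + θ * b| ≤ |(1 - θ) * a| + |θ * b| := abs_add_le _ _
    _ = (1 - θ) * |a| + θ * |b| := by
        rw [abs_mul, abs_mul, abs_of_nonneg (by linarith : (0:ℝ) ≤ 1 - θ), abs_of_nonneg h0]
    _ ≤ (1 - θ) * Real.sqrt 2 + θ * Real.sqrt 2 :=
        add_le_add (mul_le_mul_of_nonneg_left ha (by linarith))
          (mul_le_mul_of_nonneg_left hb h0)
    _ = Real.sqrt 2 := by ring

lemma Gn_abs_le (n : ℕ) (t x y : ℝ) :
    |Gn n t x y| ≤ 2 * ∑ j ∈ Finset.Icc 1 (n - 1), Real.exp (lamn n j * t) := by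
  unfold Gn
  calc |∑ j ∈ Finset.Icc 1 (n - 1), Real.exp (lamn n j * t) * phiLin n j x * phiF j (kappa n y)|
      ≤ ∑ j ∈ Finset.Icc 1 (n - 1), |Real.exp (lamn n j * t) * phiLin n j x * phiF j (kappa n y)| :=
        Finset.abs_sum_le_sum_abs _ _
    _ ≤ ∑ j ∈ Finset.Icc 1 (n - 1), Real.exp (lamn n j * t) * 2 := by
        refine Finset.sum_le_sum fun j _ => ?_
        rw [abs_mul, abs_mul, abs_of_nonneg (Real.exp_pos _).le]
        have h2 : (0:ℝ) ≤ Real.sqrt 2 := Real.sqrt_nonneg 2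
        have hs : Real.sqrt 2 * Real.sqrt 2 = 2 := Real.mul_self_sqrt (by norm_num)
        have := phiLin_abs_le n j x
        have := phiF_abs_le j (kappa n y)
        rw [mul_assoc]
        refine mul_le_mul_of_nonneg_left ?_ (Real.exp_pos _).le
        calc |phiLin n j x| * |phiF j (kappa n y)| ≤ Real.sqrt 2 * Real.sqrt 2 :=
              mul_le_mul (phiLin_abs_le n j x) (phiF_abs_le j (kappa n y)) (abs_nonneg _)
                (Real.sqrt_nonneg 2)
          _ = 2 := hs
    _ = 2 * ∑ j ∈ Finset.Icc 1 (n - 1), Real.exp (lamn n j * t) := by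
        rw [Finset.mul_sum]
        exact Finset.sum_congr rfl fun j _ => by ring

lemma lamn_nonpos (n j : ℕ) : lamn n j ≤ 0 := by
  unfold lamn
  nlinarith [sq_nonneg ((n:ℝ)), sq_nonneg (Real.sin ((j : ℝ) * Real.pi / (2 * n)))]

lemma Gn_meas (n : ℕ) (t x : ℝ) : Measurable fun y => |Gn n t x y| := by
  apply Measurable.abs
  unfold Gn
  apply Finset.measurable_sum
  intro j _
  apply Measurable.mul
  · exact measurable_const
  · unfold phiF kappa
    apply Measurable.const_mul
    apply Real.measurable_sin.comp
    apply Measurable.const_mul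
    apply Measurable.div_const
    have hfl : Measurable fun y : ℝ => ⌊(n : ℝ) * y⌋ :=
      Measurable.floor (measurable_id.const_mul _)
    exact (continuous_of_discreteTopology : Continuous (Int.cast : ℤ → ℝ)).measurable.comp hfl

/-! ### The 1-d integral bounds -/

lemma Gn_intOn (n : ℕ) (hn : 2 ≤ n) {t : ℝ} (ht : 0 ≤ t) (x : ℝ) (s : Set ℝ)
    (hs : s ⊆ Set.Icc (0:ℝ) 1) : IntegrableOn (fun y => |Gn n t x y|) s := by
  have hsub : IntegrableOn (fun y => |Gn n t x y|) (Set.Icc (0:ℝ) 1) := by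
    refine Measure.integrableOn_of_bounded (M := 2 * (n : ℝ)) ?_ ?_ ?_
    · rw [Real.volume_Icc]
      exact ENNReal.ofReal_ne_top
    · exact (Gn_meas n t x).aestronglyMeasurable
    · refine ae_of_all _ fun y => ?_
      rw [Real.norm_of_nonneg (abs_nonneg _)]
      calc |Gn n t x y| ≤ 2 * ∑ j ∈ Finset.Icc 1 (n - 1), Real.exp (lamn n j * t) :=
            Gn_abs_le n t x y
        _ ≤ 2 * ∑ j ∈ Finset.Icc 1 (n - 1), 1 := by
            gcongr with j hj
            rw [show (1:ℝ) = Real.exp 0 by simp]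
            exact Real.exp_le_exp.mpr (mul_nonpos_of_nonpos_of_nonneg (lamn_nonpos n j) ht)
        _ ≤ 2 * n := by
            rw [Finset.sum_const, Nat.card_Icc, nsmul_eq_mul, mul_one]
            have h1 : ((n - 1 + 1 - 1 : ℕ) : ℝ) ≤ (n : ℝ) := by
              exact_mod_cast (by omega : n - 1 + 1 - 1 ≤ n)
            linarith
  exact hsub.mono_set hs

lemma massInt (n : ℕ) (hn : 2 ≤ n) {t : ℝ} (ht : 0 ≤ t) (x : ℝ) :
    ∫ y in Set.Icc (0:ℝ) 1, |Gn n t x y| ≤ 2 := by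
  classical
  have hn0 : (0:ℝ) < n := by exact_mod_cast by omega
  set i : ℤ := ⌊(n : ℝ) * x⌋ with hi
  set θ : ℝ := Int.fract ((n : ℝ) * x) with hθ
  have hθ0 : 0 ≤ θ := Int.fract_nonneg _
  have hθ1 : θ ≤ 1 := (Int.fract_lt_one _).le
  set S : ℕ → Set ℝ := fun k => Set.Ico ((k : ℝ) / n) (((k : ℝ) + 1) / n) with hS
  have hSsub : ∀ k ∈ Finset.range n, S k ⊆ Set.Icc (0:ℝ) 1 := by
    intro k hk
    simp only [Finset.mem_range] at hk
    intro y hy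
    simp only [hS, Set.mem_Ico] at hy
    refine Set.mem_Icc.mpr ⟨?_, ?_⟩
    · have : (0:ℝ) ≤ (k:ℝ)/n := by positivity
      linarith [hy.1]
    · have hk1 : ((k:ℝ)+1)/n ≤ 1 := by
        rw [div_le_one hn0]
        exact_mod_cast (by omega : k + 1 ≤ n)
      linarith [hy.2]
  have hcover : Set.Ico (0:ℝ) 1 = ⋃ k ∈ Finset.range n, S k := by
    ext y
    simp only [Set.mem_Ico, Set.mem_iUnion, Finset.mem_range, hS, exists_prop]
    constructor
    · rintro ⟨h0, h1⟩
      have h00 : 0 ≤ ⌊(n : ℝ) * y⌋ := Int.floor_nonneg.mpr (by positivity)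
      have hlt : ⌊(n : ℝ) * y⌋ < (n : ℤ) := by
        rw [Int.floor_lt]
        push_cast
        nlinarith
      have hcast : ((⌊(n : ℝ) * y⌋.toNat : ℕ) : ℝ) = ((⌊(n : ℝ) * y⌋ : ℤ) : ℝ) := by
        exact_mod_cast Int.toNat_of_nonneg h00
      refine ⟨⌊(n : ℝ) * y⌋.toNat, by omega, ?_, ?_⟩
      · have hfl := Int.floor_le ((n : ℝ) * y)
        rw [div_le_iff₀ hn0, hcast]
        linarith [mul_comm y (n:ℝ)]
      · have hfl := Int.lt_floor_add_one ((n : ℝ) * y)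
        rw [lt_div_iff₀ hn0, hcast]
        linarith [mul_comm y (n:ℝ)]
    · rintro ⟨k, hk, h0, h1⟩
      constructor
      · have : (0:ℝ) ≤ (k:ℝ)/n := by positivity
        linarith
      · have hk1 : ((k : ℝ) + 1) / n ≤ 1 := by
          rw [div_le_one hn0]
          exact_mod_cast (by omega : k + 1 ≤ n)
        linarith
  have hdisj : (Finset.range n : Set ℕ).PairwiseDisjoint S := by
    intro a _ b _ hab
    have key : ∀ a b : ℕ, a < b → Disjoint (S a) (S b) := by
      intro a b h
      simp only [hS]
      rw [Set.Ico_disjoint_Ico]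
      have hle : ((a : ℝ) + 1) / n ≤ (b : ℝ) / n := by
        have h1 : ((a:ℝ) + 1) ≤ (b:ℝ) := by exact_mod_cast (by omega : a + 1 ≤ b)
        gcongr
      calc min (((a:ℝ)+1)/n) (((b:ℝ)+1)/n) ≤ ((a:ℝ)+1)/n := min_le_left _ _
        _ ≤ (b:ℝ)/n := hle
        _ ≤ max ((a:ℝ)/n) ((b:ℝ)/n) := le_max_right _ _
    rcases lt_or_gt_of_ne hab with h | h
    · exact key a b h
    · exact (key b a h).symm
  have heach : ∀ k ∈ Finset.range n,
      ∫ y in S k, |Gn n t x y|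
        = |(1 - θ) * Rk n t i (k : ℤ) + θ * Rk n t (i + 1) (k : ℤ)| * (1 / n) := by
    intro k hk
    have hconst : Set.EqOn (fun y => |Gn n t x y|)
        (fun _ => |(1 - θ) * Rk n t i (k : ℤ) + θ * Rk n t (i + 1) (k : ℤ)|) (S k) := by
      intro y hy
      simp only [hS, Set.mem_Ico] at hy
      have hl : (k : ℝ) ≤ (n : ℝ) * y := by
        have := (div_le_iff₀ hn0).mp hy.1
        linarith [mul_comm y (n:ℝ)]
      have hr : (n : ℝ) * y < (k : ℝ) + 1 := by
        have := (lt_div_iff₀ hn0).mp hy.2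
        linarith [mul_comm y (n:ℝ)]
      have hfloor : ⌊(n : ℝ) * y⌋ = (k : ℤ) := by
        rw [Int.floor_eq_iff]
        constructor <;> push_cast <;> linarith
      simp only
      rw [Gn_cell n t x y (k : ℤ) hfloor, ← hθ, ← hi]
    rw [setIntegral_congr_fun measurableSet_Ico hconst, setIntegral_const, Real.volume_real_Ico,
      smul_eq_mul, mul_comm]
    congr 1
    have harea : ((k:ℝ)+1)/n - (k:ℝ)/n = 1/n := by
      field_simp
      ring
    rw [harea, max_eq_left (by positivity : (0:ℝ) ≤ 1/(n:ℝ))]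
  have hm1 := mass n hn ht i
  have hm2 := mass n hn ht (i+1)
  calc ∫ y in Set.Icc (0:ℝ) 1, |Gn n t x y|
      = ∫ y in Set.Ico (0:ℝ) 1, |Gn n t x y| := integral_Icc_eq_integral_Ico
    _ = ∑ k ∈ Finset.range n, ∫ y in S k, |Gn n t x y| := by
        rw [hcover]
        exact integral_biUnion_finset (Finset.range n) (fun k _ => measurableSet_Ico) hdisj
          (fun k hk => Gn_intOn n hn ht x (S k) (hSsub k hk))
    _ = ∑ k ∈ Finset.range n,
          |(1 - θ) * Rk n t i (k : ℤ) + θ * Rk n t (i + 1) (k : ℤ)| * (1 / n) :=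
        Finset.sum_congr rfl heach
    _ ≤ ∑ k ∈ Finset.range n,
          ((1 - θ) * |Rk n t i (k : ℤ)| + θ * |Rk n t (i + 1) (k : ℤ)|) * (1 / n) := by
        refine Finset.sum_le_sum fun k _ => ?_
        refine mul_le_mul_of_nonneg_right ?_ (by positivity)
        calc |(1 - θ) * Rk n t i (k : ℤ) + θ * Rk n t (i + 1) (k : ℤ)|
            ≤ |(1 - θ) * Rk n t i (k : ℤ)| + |θ * Rk n t (i + 1) (k : ℤ)| := abs_add_le _ _
          _ = (1 - θ) * |Rk n t i (k : ℤ)| + θ * |Rk n t (i + 1) (k : ℤ)| := by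
              rw [abs_mul, abs_mul, abs_of_nonneg (by linarith : (0:ℝ) ≤ 1 - θ),
                abs_of_nonneg hθ0]
    _ = ((1 - θ) * ∑ k ∈ Finset.range n, |Rk n t i (k : ℤ)|
          + θ * ∑ k ∈ Finset.range n, |Rk n t (i + 1) (k : ℤ)|) * (1 / n) := by
        rw [← Finset.sum_mul, Finset.sum_add_distrib, Finset.mul_sum, Finset.mul_sum]
    _ ≤ ((1 - θ) * (2 * n) + θ * (2 * n)) * (1 / n) := by
        refine mul_le_mul_of_nonneg_right ?_ (by positivity)
        exact add_le_add (mul_le_mul_of_nonneg_left hm1 (by linarith))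
          (mul_le_mul_of_nonneg_left hm2 hθ0)
    _ = 2 := by
        field_simp
        ring

lemma lamn_le (n : ℕ) (hn : 2 ≤ n) (j : ℕ) (hj : j ∈ Finset.Icc 1 (n - 1)) :
    lamn n j ≤ -4 * (j : ℝ) ^ 2 := by
  simp only [Finset.mem_Icc] at hj
  have hn0 : (0:ℝ) < n := by exact_mod_cast by omega
  have hjn : (j : ℝ) ≤ (n : ℝ) := by exact_mod_cast (by omega : j ≤ n)
  have hθ0 : 0 ≤ (j : ℝ) * Real.pi / (2 * n) := by positivity
  have hθ : (j : ℝ) * Real.pi / (2 * n) ≤ Real.pi / 2 := by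
    rw [div_le_div_iff₀ (by positivity) (by norm_num)]
    nlinarith [Real.pi_pos]
  have hs := Real.mul_le_sin hθ0 hθ
  have h2 : (j : ℝ) / n ≤ Real.sin ((j : ℝ) * Real.pi / (2 * n)) := by
    have he : 2 / Real.pi * ((j : ℝ) * Real.pi / (2 * n)) = (j : ℝ) / n := by
      field_simp [Real.pi_ne_zero]
    linarith [he ▸ hs]
  have h3 : ((j : ℝ) / n) ^ 2 ≤ Real.sin ((j : ℝ) * Real.pi / (2 * n)) ^ 2 :=
    pow_le_pow_left₀ (by positivity) h2 2
  unfold lamn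
  rw [div_pow] at h3
  have h4 : (j : ℝ) ^ 2 / (n : ℝ) ^ 2 * (4 * (n : ℝ) ^ 2) = 4 * (j : ℝ) ^ 2 := by
    field_simp
  nlinarith [h3, sq_nonneg (n : ℝ)]

lemma expsum_le (n : ℕ) (hn : 2 ≤ n) {t : ℝ} (ht : 1 ≤ t) :
    ∑ j ∈ Finset.Icc 1 (n - 1), Real.exp (lamn n j * t) ≤ 2 * Real.exp (-(4 * t)) := by
  have he4 : Real.exp (-(4:ℝ)) ≤ 1 / 2 := by
    rw [Real.exp_neg, inv_le_iff_one_le_mul₀ (Real.exp_pos 4)]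
    nlinarith [Real.add_one_le_exp (4:ℝ)]
  calc ∑ j ∈ Finset.Icc 1 (n - 1), Real.exp (lamn n j * t)
      ≤ ∑ j ∈ Finset.Icc 1 (n - 1), Real.exp (-(4 * t)) * (1 / 2 : ℝ) ^ (j - 1) := by
        refine Finset.sum_le_sum fun j hj => ?_
        have hl := lamn_le n hn j hj
        have hj1 : 1 ≤ j := (Finset.mem_Icc.mp hj).1
        have hjr : (1:ℝ) ≤ (j:ℝ) := by exact_mod_cast hj1
        have e1 : lamn n j * t ≤ -(4 * t) + (j - 1 : ℕ) * (-(4:ℝ)) := by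
          have hmul : lamn n j * t ≤ -4 * (j:ℝ)^2 * t := by
            apply mul_le_mul_of_nonneg_right hl (by linarith)
          have hcast : ((j - 1 : ℕ) : ℝ) = (j : ℝ) - 1 := by
            push_cast [Nat.cast_sub hj1]
            ring
          rw [hcast]
          have p1 : (0:ℝ) ≤ (j:ℝ) - 1 := by linarith
          have p2 : (0:ℝ) ≤ t * ((j:ℝ) + 1) - 1 := by nlinarith
          nlinarith [hmul, mul_nonneg p1 p2]
        calc Real.exp (lamn n j * t) ≤ Real.exp (-(4 * t) + (j - 1 : ℕ) * (-(4:ℝ))) :=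
              Real.exp_le_exp.mpr e1
          _ = Real.exp (-(4 * t)) * Real.exp (-(4:ℝ)) ^ (j - 1) := by
              rw [Real.exp_add, Real.exp_nat_mul]
          _ ≤ Real.exp (-(4 * t)) * (1 / 2 : ℝ) ^ (j - 1) := by
              gcongr
    _ = Real.exp (-(4 * t)) * ∑ j ∈ Finset.Icc 1 (n - 1), (1 / 2 : ℝ) ^ (j - 1) := by
        rw [Finset.mul_sum]
    _ ≤ Real.exp (-(4 * t)) * 2 := by
        refine mul_le_mul_of_nonneg_left ?_ (Real.exp_pos _).le
        have hre : ∑ j ∈ Finset.Icc 1 (n - 1), (1 / 2 : ℝ) ^ (j - 1)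
            = ∑ i ∈ Finset.range (n - 1), (1 / 2 : ℝ) ^ i := by
          refine Finset.sum_nbij' (fun j => j - 1) (fun i => i + 1) ?_ ?_ ?_ ?_ ?_
          · intro a ha
            simp only [Finset.mem_Icc] at ha
            simp only [Finset.mem_range]
            omega
          · intro a ha
            simp only [Finset.mem_range] at ha
            simp only [Finset.mem_Icc]
            omega
          · intro a ha
            simp only [Finset.mem_Icc] at ha
            show a - 1 + 1 = a
            omega
          · intro a ha
            simp only [Finset.mem_range] at ha
            show a + 1 - 1 = a
            omega
          · intro a ha
            rfl
        rw [hre]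
        exact sum_geometric_two_le _
    _ = 2 * Real.exp (-(4 * t)) := mul_comm _ _

lemma oneD (n : ℕ) (hn : 2 ≤ n) {t : ℝ} (ht : 0 < t) (x : ℝ) :
    ∫ y in Set.Icc (0:ℝ) 1, |Gn n t x y| ≤ 2 * Real.exp 4 * Real.exp (-(4 * t)) := by
  rcases le_or_gt t 1 with hcase | hcase
  · have hmass := massInt n hn ht.le x
    have h2 : (2:ℝ) ≤ 2 * Real.exp 4 * Real.exp (-(4 * t)) := by
      rw [mul_assoc, ← Real.exp_add]
      have h0 : (0:ℝ) ≤ 4 + -(4 * t) := by linarith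
      nlinarith [Real.one_le_exp h0]
    linarith
  · have hpt : ∀ y ∈ Set.Icc (0:ℝ) 1, |Gn n t x y| ≤ 4 * Real.exp (-(4 * t)) := by
      intro y _
      calc |Gn n t x y| ≤ 2 * ∑ j ∈ Finset.Icc 1 (n - 1), Real.exp (lamn n j * t) :=
            Gn_abs_le n t x y
        _ ≤ 2 * (2 * Real.exp (-(4 * t))) := by
            have := expsum_le n hn hcase.le
            linarith
        _ = 4 * Real.exp (-(4 * t)) := by ring
    calc ∫ y in Set.Icc (0:ℝ) 1, |Gn n t x y|
        ≤ ∫ _ in Set.Icc (0:ℝ) 1, 4 * Real.exp (-(4 * t)) := by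
          refine setIntegral_mono_on (Gn_intOn n hn ht.le x _ le_rfl)
            (integrableOn_const (by rw [Real.volume_Icc]; exact ENNReal.ofReal_ne_top))
            measurableSet_Icc hpt
      _ = 4 * Real.exp (-(4 * t)) := by
          rw [setIntegral_const, Real.volume_real_Icc, smul_eq_mul]
          norm_num
      _ ≤ 2 * Real.exp 4 * Real.exp (-(4 * t)) := by
          have h4 : (4:ℝ) ≤ 2 * Real.exp 4 := by
            nlinarith [Real.add_one_le_exp (4:ℝ)]
          nlinarith [Real.exp_pos (-(4 * t))]

end Stmt8Aux

open Stmt8Aux in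
/-- `L¹` bound for the space-discretized Green function. -/
theorem stmt_8 (d : ℕ) (hd : 1 ≤ d) (lam : ℝ) (hlam : 0 < lam) :
    ∃ c C : ℝ, 0 < c ∧ 0 < C ∧ ∀ n : ℕ, 2 ≤ n → ∀ t : ℝ, 0 < t → ∀ x ∈ Q d,
      (∫ y in Q d, |Gdn d n t x y|) ≤ C * (1 + t ^ (-lam)) * Real.exp (-c * t) := by
  refine ⟨4, (2 * Real.exp 4) ^ d, by norm_num, by positivity, ?_⟩
  intro n hn t ht x hx
  have e := EuclideanSpace.volume_preserving_symm_measurableEquiv_toLp (Fin d)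
  set φ := (MeasurableEquiv.toLp 2 (Fin d → ℝ)).symm with hφ
  have hQ : Q d = φ ⁻¹' (Set.univ.pi fun _ : Fin d => Set.Icc (0:ℝ) 1) := by
    ext v
    simp only [Q, Set.mem_preimage, Set.mem_pi, Set.mem_univ, forall_true_left, Set.mem_setOf_eq]
    rfl
  have key : (∫ y in Q d, |Gdn d n t x y|)
      = ∏ i, ∫ s in Set.Icc (0:ℝ) 1, |Gn n t (x i) s| := by
    have h1 : (∫ y in Q d, |Gdn d n t x y|)
        = ∫ v in (Set.univ.pi fun _ : Fin d => Set.Icc (0:ℝ) 1),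
            (∏ i, |Gn n t (x i) (v i)|) := by
      rw [hQ]
      rw [show (fun y : EuclideanSpace ℝ (Fin d) => |Gdn d n t x y|)
          = (fun v : Fin d → ℝ => ∏ i, |Gn n t (x i) (v i)|) ∘ φ from funext fun y => by
        simp only [Function.comp_apply, Gdn, Finset.abs_prod]
        rfl]
      exact e.setIntegral_preimage_emb φ.measurableEmbedding
        (fun v : Fin d → ℝ => ∏ i, |Gn n t (x i) (v i)|) (Set.univ.pi fun _ : Fin d => Set.Icc (0:ℝ) 1)
    rw [h1]
    have h2 : ∫ v in (Set.univ.pi fun _ : Fin d => Set.Icc (0:ℝ) 1),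
          (∏ i, |Gn n t (x i) (v i)|)
        = ∫ v : Fin d → ℝ, ∏ i,
            (Set.Icc (0:ℝ) 1).indicator (fun s => |Gn n t (x i) s|) (v i) := by
      rw [← integral_indicator (MeasurableSet.univ_pi fun _ => measurableSet_Icc)]
      congr 1
      funext v
      by_cases hv : v ∈ Set.univ.pi fun _ : Fin d => Set.Icc (0:ℝ) 1
      · rw [Set.indicator_of_mem hv]
        refine Finset.prod_congr rfl fun i _ => ?_
        rw [Set.indicator_of_mem (hv i (Set.mem_univ i))]
      · rw [Set.indicator_of_notMem hv]
        simp only [Set.mem_pi, Set.mem_univ, forall_true_left, not_forall] at hv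
        obtain ⟨i, hi⟩ := hv
        exact (Finset.prod_eq_zero (Finset.mem_univ i)
          (Set.indicator_of_notMem hi _)).symm
    rw [h2]
    rw [MeasureTheory.volume_pi, MeasureTheory.integral_fintype_prod_eq_prod (ι := Fin d)
      (f := fun i s => (Set.Icc (0:ℝ) 1).indicator (fun s' => |Gn n t (x i) s'|) s)]
    exact Finset.prod_congr rfl fun i _ => integral_indicator measurableSet_Icc
  rw [key]
  have hone : ∀ i : Fin d, ∫ s in Set.Icc (0:ℝ) 1, |Gn n t (x i) s|
      ≤ 2 * Real.exp 4 * Real.exp (-(4 * t)) := fun i => oneD n hn ht (x i)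
  have h3 : ∏ i : Fin d, ∫ s in Set.Icc (0:ℝ) 1, |Gn n t (x i) s|
      ≤ (2 * Real.exp 4 * Real.exp (-(4 * t))) ^ d := by
    calc ∏ i : Fin d, ∫ s in Set.Icc (0:ℝ) 1, |Gn n t (x i) s|
        ≤ ∏ _i : Fin d, (2 * Real.exp 4 * Real.exp (-(4 * t))) :=
          Finset.prod_le_prod (fun i _ => integral_nonneg fun s => abs_nonneg _)
            (fun i _ => hone i)
      _ = (2 * Real.exp 4 * Real.exp (-(4 * t))) ^ d := by
          rw [Finset.prod_const, Finset.card_univ, Fintype.card_fin]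
  have h4 : (2 * Real.exp 4 * Real.exp (-(4 * t))) ^ d
      ≤ (2 * Real.exp 4) ^ d * Real.exp (-(4 * t)) := by
    rw [mul_pow]
    refine mul_le_mul_of_nonneg_left ?_ (by positivity)
    refine pow_le_of_le_one (Real.exp_pos _).le ?_ (by omega)
    exact Real.exp_le_one_iff.mpr (by nlinarith)
  have h5 : (2 * Real.exp 4) ^ d * Real.exp (-(4 * t))
      ≤ (2 * Real.exp 4) ^ d * (1 + t ^ (-lam)) * Real.exp (-4 * t) := by
    have hrp : (0:ℝ) ≤ t ^ (-lam) := Real.rpow_nonneg ht.le _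
    have hee : Real.exp (-(4 * t)) = Real.exp (-4 * t) := by ring_nf
    rw [hee]
    nlinarith [mul_nonneg (mul_nonneg (pow_pos (by positivity : (0:ℝ) < 2 * Real.exp 4) d).le
      (Real.exp_pos (-4 * t)).le) hrp]
  linarith
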